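/- arXiv:1802.05750 — 2 statements merged into one kernel-verified Lean document; each statement's English description precedes it below -/
import Mathlib

section
/- Let κ be an uncountable regular cardinal with κ^{<κ}=κ. If A ⊆ 2^κ has empty interior and has the κ-Hurewicz property, then A is κ-meagre. Consequently, no λ-κ-Lusin set (κ < λ ≤ 2^κ) has the κ-Hurewicz property. -/
noncomputable section

open Cardinal Set

namespace GenSp

/-- The index set: a canonical type of order type `κ.ord`. -/
abbrev I (κ : Cardinal.{0}) : Type := κ.ord.ToType

variable (κ : Cardinal.{0}) (A : Type)

/-- The generalized space `A^κ`. -/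
abbrev Sp : Type := I κ → A

/-- The basic clopen set `[x ↾ ξ]`: all functions agreeing with `x` below `ξ`. -/
def cyl (x : Sp κ A) (ξ : I κ) : Set (Sp κ A) := {y | ∀ β < ξ, y β = x β}

/-- The bounded topology on `A^κ`, generated by the basic clopen sets. -/
def bt : TopologicalSpace (Sp κ A) :=
  .generateFrom {S | ∃ x ξ, S = cyl κ A x ξ}

/-- Open in the bounded topology. -/
def OpenK (s : Set (Sp κ A)) : Prop := @IsOpen _ (bt κ A) s

/-- Closed in the bounded topology. -/
def ClosedK (s : Set (Sp κ A)) : Prop := @IsClosed _ (bt κ A) s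

/-- Nowhere dense in the bounded topology. -/
def NwdK (s : Set (Sp κ A)) : Prop := @IsNowhereDense _ (bt κ A) s

/-- κ-meagre: a union of (at most) κ nowhere dense sets. -/
def MeagreK (s : Set (Sp κ A)) : Prop :=
  ∃ f : I κ → Set (Sp κ A), (∀ i, NwdK κ A (f i)) ∧ s = ⋃ i, f i

/-- κ-strongly null set. -/
def SNullK (S : Set (Sp κ A)) : Prop :=
  ∀ ξ : I κ → I κ, ∃ a : I κ → Sp κ A, S ⊆ ⋃ α, cyl κ A (a α) (ξ α)

/-- Coordinatewise addition over `ℤ₂` (translation by `x`). -/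
def xadd (x y : Sp κ Bool) : Sp κ Bool := fun i => xor (x i) (y i)

/-- The covering number of the κ-meagre ideal. -/
def covM : Cardinal :=
  sInf {c | ∃ 𝒜 : Set (Set (Sp κ A)), #𝒜 = c ∧ (∀ s ∈ 𝒜, MeagreK κ A s) ∧ ⋃₀ 𝒜 = Set.univ}

/-- The cofinality of the κ-meagre ideal. -/
def cofM : Cardinal :=
  sInf {c | ∃ 𝒜 : Set (Set (Sp κ A)), #𝒜 = c ∧ (∀ s ∈ 𝒜, MeagreK κ A s) ∧
    ∀ t, MeagreK κ A t → ∃ s ∈ 𝒜, t ⊆ s}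

/-- κ is weakly compact: uncountable and with the partition property κ → (κ)²₂. -/
def IsWeaklyCompact (κ : Cardinal.{0}) : Prop :=
  ℵ₀ < κ ∧ ∀ c : I κ → I κ → Bool, ∃ H : Set (I κ), #H = κ ∧
    ∃ b : Bool, ∀ i ∈ H, ∀ j ∈ H, i < j → c i j = b

/-- `S` is κ-meagre relative to `P` (in the subspace topology). -/
def MeagreInK (P S : Set (Sp κ A)) : Prop :=
  ∃ f : I κ → Set P,
    (∀ i, @IsNowhereDense _ (TopologicalSpace.induced Subtype.val (bt κ A)) (f i)) ∧
    {x : P | (x : Sp κ A) ∈ S} = ⋃ i, f i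

/-- Perfect set in the bounded topology. -/
def PerfK (P : Set (Sp κ A)) : Prop := @Perfect _ (bt κ A) P

/-- Perfectly κ-meagre set. -/
def PMeagreK (S : Set (Sp κ A)) : Prop := ∀ P, PerfK κ A P → MeagreInK κ A P S

/-- κ-λ-set. -/
def KLambdaSet (S : Set (Sp κ A)) : Prop :=
  ∀ B ⊆ S, #B ≤ κ → ∃ G : I κ → Set (Sp κ A),
    (∀ i, OpenK κ A (G i)) ∧ (⋂ i, G i) ∩ S = B

/-- κ-σ-set. -/
def KSigmaSet (S : Set (Sp κ A)) : Prop :=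
  ∀ F : I κ → Set (Sp κ A), (∀ i, ClosedK κ A (F i)) →
    ∃ G : I κ → Set (Sp κ A), (∀ i, OpenK κ A (G i)) ∧
      S ∩ (⋃ i, F i) = S ∩ (⋂ i, G i)

/-- κ-γ-set: every open (proper) κ-cover contains a κ-γ-subcover of size κ. -/
def KGammaSet (X : Set (Sp κ A)) : Prop :=
  ∀ 𝒰 : Set (Set (Sp κ A)), (∀ U ∈ 𝒰, OpenK κ A U) → X ∉ 𝒰 →
    (∀ C ⊆ X, #C < κ → ∃ U ∈ 𝒰, C ⊆ U) →
    ∃ U : I κ → Set (Sp κ A), (∀ α, U α ∈ 𝒰) ∧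
      X ⊆ ⋃ α, ⋂ β, ⋂ (_ : α < β), U β

/-- A (proper) open cover of `X` of size κ, indexed by `I κ`. -/
def IsOCovSeq (X : Set (Sp κ A)) (U : I κ → Set (Sp κ A)) : Prop :=
  (∀ α, OpenK κ A (U α)) ∧ (∀ α, U α ≠ X) ∧ X ⊆ ⋃ α, U α

/-- A (proper) κ-γ-cover of `X`, indexed by `I κ`. -/
def IsGammaCovSeq (X : Set (Sp κ A)) (U : I κ → Set (Sp κ A)) : Prop :=
  (∀ α, OpenK κ A (U α)) ∧ (∀ α, U α ≠ X) ∧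
    X ⊆ ⋃ α, ⋂ β, ⋂ (_ : α < β), U β

/-- The cover `U` is essentially of size κ: no subfamily of size `< κ` covers `X`. -/
def EssK (X : Set (Sp κ A)) (U : I κ → Set (Sp κ A)) : Prop :=
  ∀ s : Set (I κ), #s < κ → ¬ X ⊆ ⋃ β ∈ s, U β

/-- The selection principle `S₁^κ(Γ_κ, Γ_κ)`. -/
def S1GammaGamma (X : Set (Sp κ A)) : Prop :=
  ∀ 𝒰 : I κ → I κ → Set (Sp κ A), (∀ α, IsGammaCovSeq κ A X (𝒰 α)) →
    ∃ f : I κ → I κ, IsGammaCovSeq κ A X (fun α => 𝒰 α (f α))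

/-- The κ-Hurewicz property `U^κ_{<κ}(O_κ, Γ_κ)`. -/
def KHurewicz (X : Set (Sp κ A)) : Prop :=
  ∀ 𝒰 : I κ → I κ → Set (Sp κ A), (∀ α, IsOCovSeq κ A X (𝒰 α)) →
    (∀ α, EssK κ A X (𝒰 α)) →
    ∃ V : I κ → Set (I κ), (∀ α, #(V α) < κ) ∧
      IsGammaCovSeq κ A X (fun α => ⋃ β ∈ V α, 𝒰 α β)

/-- The κ-Menger property `U^κ_{<κ}(O_κ, O_κ)`. -/
def KMenger (X : Set (Sp κ A)) : Prop :=
  ∀ 𝒰 : I κ → I κ → Set (Sp κ A), (∀ α, IsOCovSeq κ A X (𝒰 α)) →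
    (∀ α, EssK κ A X (𝒰 α)) →
    ∃ V : I κ → Set (I κ), (∀ α, #(V α) < κ) ∧
      IsOCovSeq κ A X (fun α => ⋃ β ∈ V α, 𝒰 α β)

/-- The κ-Rothberger property `S₁^κ(O_κ, O_κ)`. -/
def KRothberger (X : Set (Sp κ A)) : Prop :=
  ∀ 𝒰 : I κ → I κ → Set (Sp κ A), (∀ α, IsOCovSeq κ A X (𝒰 α)) →
    ∃ f : I κ → I κ, IsOCovSeq κ A X (fun α => 𝒰 α (f α))

/-- Closed unbounded subset of `I κ`. -/
def IsClubK (S : Set (I κ)) : Prop :=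
  (∀ a : I κ, ∃ b ∈ S, a < b) ∧
  (∀ a : I κ, (∃ b, b < a) → (∀ b < a, ∃ c ∈ S, b < c ∧ c < a) → a ∈ S)

/-- Stationary subset of `I κ`. -/
def IsStatK (S : Set (I κ)) : Prop :=
  ∀ C : Set (I κ), IsClubK κ C → (S ∩ C).Nonempty

/-- The diamond principle `◇_κ(E)`. -/
def DiamondK (E : Set (I κ)) : Prop :=
  ∃ s : I κ → Set (I κ), (∀ α, s α ⊆ Iio α) ∧
    ∀ X : Set (I κ), IsStatK κ {α | α ∈ E ∧ X ∩ Iio α = s α}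

/-- The guessing principle `◇_κ(E, 2^κ, NS_κ)`. -/
def DiamondFunK (E : Set (I κ)) : Prop :=
  ∃ s : I κ → Sp κ Bool,
    ∀ x : Sp κ Bool, IsStatK κ {α | α ∈ E ∧ ∀ β < α, x β = s α β}

/-- `S` is `X`-small. -/
def XSmall (X : Set (I κ)) (S : Set (Sp κ A)) : Prop :=
  ∃ a : I κ → Sp κ A, S ⊆ ⋃ α ∈ X, cyl κ A (a α) α

/-- `S` is small in `A^κ`. -/
def SmallK (S : Set (Sp κ A)) : Prop :=
  ∃ lam : Cardinal, lam < κ ∧ ∀ α : I κ, ∃ T : Set (Sp κ A),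
    #T ≤ lam ∧ S ⊆ ⋃ x ∈ T, cyl κ A x α


/-! ### Auxiliary lemmas -/

section Aux

lemma I_nonempty (hk : ℵ₀ < κ) : Nonempty (I κ) :=
  Ordinal.toType_nonempty_iff_ne_zero.2
    (by rw [ne_eq, Cardinal.ord_eq_zero]; exact (aleph0_pos.trans hk).ne')

lemma mk_I : #(I κ) = κ := Cardinal.mk_ord_toType κ

lemma mk_Iio_lt (b : I κ) : #(Iio b) < κ := Cardinal.mk_Iio_ord_toType b

lemma exists_bound (hk : ℵ₀ < κ) (hreg : κ.IsRegular) {s : Set (I κ)} (h : #s < κ) :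
    ∃ b : I κ, ∀ a ∈ s, a < b := by
  haveI : NoMaxOrder (I κ) := Cardinal.noMaxOrder hk.le
  haveI : IsWellOrder (I κ) (· < ·) := isWellOrder_lt
  have hsup : (⨆ a : s, Ordinal.typein (α := I κ) (· < ·) a.1) < κ.ord :=
    Cardinal.iSup_lt_ord_of_isRegular hreg h fun _ => Ordinal.typein_lt_self _
  have hsup' : (⨆ a : s, Ordinal.typein (α := I κ) (· < ·) a.1) <
      Ordinal.type (α := I κ) (· < ·) := by
    rw [Ordinal.type_toType]; exact hsup
  set b0 : I κ := Ordinal.enum (α := I κ) (· < ·) ⟨_, hsup'⟩ with hb0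
  have hle : ∀ a ∈ s, a ≤ b0 := by
    intro a ha
    have h1 : Ordinal.typein (α := I κ) (· < ·) a ≤
        ⨆ a : s, Ordinal.typein (α := I κ) (· < ·) a.1 :=
      Ordinal.le_iSup _ (⟨a, ha⟩ : s)
    have h2 : Ordinal.typein (α := I κ) (· < ·) b0 =
        ⨆ a : s, Ordinal.typein (α := I κ) (· < ·) a.1 := Ordinal.typein_enum _ _
    have h3 : Ordinal.typein (α := I κ) (· < ·) a ≤ Ordinal.typein (α := I κ) (· < ·) b0 :=
      h1.trans h2.ge
    exact not_lt.1 ((Ordinal.typein_le_typein _).1 h3)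
  obtain ⟨b, hb⟩ := exists_gt b0
  exact ⟨b, fun a ha => (hle a ha).trans_lt hb⟩

lemma exists_ge_of_big (hk : ℵ₀ < κ) {s : Set (I κ)} (h : κ ≤ #s) (b : I κ) :
    ∃ a ∈ s, b < a := by
  haveI : NoMaxOrder (I κ) := Cardinal.noMaxOrder hk.le
  by_contra hc
  push_neg at hc
  obtain ⟨b', hb'⟩ := exists_gt b
  have hsub : s ⊆ Iio b' := fun a ha => lt_of_le_of_lt (hc a ha) hb'
  exact absurd (h.trans (mk_le_mk_of_subset hsub)) (mk_Iio_lt κ b').not_ge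

lemma cyl_self (x : Sp κ Bool) (ξ : I κ) : x ∈ cyl κ Bool x ξ := fun _ _ => rfl

lemma cyl_anti {x : Sp κ Bool} {ξ η : I κ} (h : η ≤ ξ) : cyl κ Bool x ξ ⊆ cyl κ Bool x η :=
  fun _ hy β hβ => hy β (lt_of_lt_of_le hβ h)

lemma cyl_congr {x z : Sp κ Bool} {ξ : I κ} (h : ∀ β < ξ, x β = z β) :
    cyl κ Bool x ξ = cyl κ Bool z ξ := by
  ext y
  constructor <;> intro hy β hβ
  · rw [hy β hβ, h β hβ]
  · rw [hy β hβ, ← h β hβ]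

lemma cyl_of_mem {x z : Sp κ Bool} {ξ : I κ} (h : z ∈ cyl κ Bool x ξ) :
    cyl κ Bool z ξ = cyl κ Bool x ξ := cyl_congr κ h

lemma openK_of_cyl {S : Set (Sp κ Bool)} (h : ∀ x ∈ S, ∃ ξ, cyl κ Bool x ξ ⊆ S) :
    OpenK κ Bool S := by
  letI := bt κ Bool
  choose ξ hξ using h
  have hS : S = ⋃ x : S, cyl κ Bool x.1 (ξ x.1 x.2) := by
    apply Set.Subset.antisymm
    · intro x hx; exact mem_iUnion.2 ⟨⟨x, hx⟩, cyl_self κ x _⟩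
    · exact iUnion_subset fun x => hξ x.1 x.2
  rw [OpenK, hS]
  exact isOpen_iUnion fun x =>
    TopologicalSpace.isOpen_generateFrom_of_mem ⟨x.1, ξ x.1 x.2, rfl⟩

lemma openK_cyl (x : Sp κ Bool) (ξ : I κ) : OpenK κ Bool (cyl κ Bool x ξ) :=
  TopologicalSpace.isOpen_generateFrom_of_mem ⟨x, ξ, rfl⟩

lemma exists_cyl_subset (hk : ℵ₀ < κ) {S : Set (Sp κ Bool)} (hS : OpenK κ Bool S) :
    ∀ x ∈ S, ∃ ξ, cyl κ Bool x ξ ⊆ S := by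
  haveI hne : Nonempty (I κ) := I_nonempty κ hk
  have hS' : TopologicalSpace.GenerateOpen {S | ∃ x ξ, S = cyl κ Bool x ξ} S := hS
  clear hS
  induction hS' with
  | basic U hU =>
    obtain ⟨z, η, rfl⟩ := hU
    intro x hx
    exact ⟨η, by rw [cyl_of_mem κ hx]⟩
  | univ => exact fun x _ => ⟨Classical.arbitrary _, subset_univ _⟩
  | inter U V _ _ ihU ihV =>
    intro x hx
    obtain ⟨ξ₁, h₁⟩ := ihU x hx.1
    obtain ⟨ξ₂, h₂⟩ := ihV x hx.2
    exact ⟨max ξ₁ ξ₂, subset_inter ((cyl_anti κ (le_max_left _ _)).trans h₁)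
      ((cyl_anti κ (le_max_right _ _)).trans h₂)⟩
  | sUnion T _ ih =>
    intro x hx
    obtain ⟨U, hU, hxU⟩ := hx
    obtain ⟨ξ, hξ⟩ := ih U hU x hxU
    exact ⟨ξ, hξ.trans (subset_sUnion_of_mem hU)⟩

lemma closedK_cyl (x : Sp κ Bool) (ξ : I κ) : ClosedK κ Bool (cyl κ Bool x ξ) := by
  letI := bt κ Bool
  rw [ClosedK, ← isOpen_compl_iff]
  refine openK_of_cyl κ fun y hy => ⟨ξ, fun z hz hc => hy fun β hβ => ?_⟩
  exact (hz β hβ).symm.trans (hc β hβ)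

lemma closure_inter_cyl {S : Set (Sp κ Bool)} {x : Sp κ Bool}
    (hx : x ∈ @closure _ (bt κ Bool) S) (ξ : I κ) : (S ∩ cyl κ Bool x ξ).Nonempty := by
  letI := bt κ Bool
  have h := (mem_closure_iff.1 hx) (cyl κ Bool x ξ) (openK_cyl κ x ξ) (cyl_self κ x ξ)
  exact h.imp fun y hy => ⟨hy.2, hy.1⟩

lemma nwdK_of_closed (hk : ℵ₀ < κ) {s : Set (Sp κ Bool)} (hcl : ClosedK κ Bool s)
    (h : ∀ x ξ, ¬ cyl κ Bool x ξ ⊆ s) : NwdK κ Bool s := by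
  letI := bt κ Bool
  show interior (closure s) = ∅
  rw [IsClosed.closure_eq hcl, eq_empty_iff_forall_notMem]
  intro x hx
  obtain ⟨ξ, hξ⟩ := exists_cyl_subset κ hk (isOpen_interior (s := s)) x hx
  exact h x ξ (hξ.trans interior_subset)

lemma nwdK_subset {s t : Set (Sp κ Bool)} (h : s ⊆ t) (ht : NwdK κ Bool t) :
    NwdK κ Bool s := by
  letI := bt κ Bool
  have hmono : interior (closure s) ⊆ interior (closure t) := interior_mono (closure_mono h)
  show interior (closure s) = ∅
  have ht' : interior (closure t) = ∅ := ht
  exact subset_empty_iff.1 (ht' ▸ hmono)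

lemma closedK_W (hk : ℵ₀ < κ) (hreg : κ.IsRegular) (d : Sp κ Bool) {V : Set (I κ)}
    (hV : #V < κ) : ClosedK κ Bool (⋃ η ∈ V, (cyl κ Bool d η)ᶜ) := by
  letI := bt κ Bool
  obtain ⟨b, hb⟩ := exists_bound κ hk hreg hV
  have hopen : OpenK κ Bool (⋂ η ∈ V, cyl κ Bool d η) := by
    apply openK_of_cyl
    intro x hx
    refine ⟨b, fun z hz => ?_⟩
    simp only [mem_iInter] at hx ⊢
    intro η hη β hβ
    rw [hz β (hβ.trans (hb η hη)), hx η hη β hβ]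
  show IsClosed _
  rw [show (⋃ η ∈ V, (cyl κ Bool d η)ᶜ) = (⋂ η ∈ V, cyl κ Bool d η)ᶜ by ext y; simp]
  exact isClosed_compl_iff.2 hopen

lemma part1 (hk : ℵ₀ < κ) (hreg : κ.IsRegular) (hpow : κ ^< κ = κ) (S : Set (Sp κ Bool))
    (hint : @interior _ (bt κ Bool) S = ∅) (hH : KHurewicz κ Bool S) :
    MeagreK κ Bool S := by
  letI := bt κ Bool
  haveI hne : Nonempty (I κ) := I_nonempty κ hk
  haveI : NoMaxOrder (I κ) := Cardinal.noMaxOrder hk.le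
  by_cases hR0 : ∀ (z : Sp κ Bool) (ξ : I κ), ¬ cyl κ Bool z ξ ⊆ closure S
  · have hnwd : NwdK κ Bool S :=
      nwdK_subset κ subset_closure (nwdK_of_closed κ hk isClosed_closure hR0)
    exact ⟨fun _ => S, fun _ => hnwd, (iUnion_const S).symm⟩
  push_neg at hR0
  obtain ⟨z₀, ξ₀, hz₀⟩ := hR0
  have hSne : S.Nonempty := closure_nonempty_iff.1 ⟨z₀, hz₀ (cyl_self κ z₀ ξ₀)⟩
  set R : Set (Set (Sp κ Bool)) := {c | (∃ z ξ, c = cyl κ Bool z ξ) ∧ c ⊆ closure S} with hRdef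
  have hmkR : #R ≤ κ := by
    have hF : R ⊆ range (fun p : (Σ ξ : I κ, (Iio ξ → Bool)) =>
        cyl κ Bool (fun β => if h : β < p.1 then p.2 ⟨β, h⟩ else false) p.1) := by
      rintro c ⟨⟨z, ξ, rfl⟩, -⟩
      exact ⟨⟨ξ, fun b => z b.1⟩, cyl_congr κ (fun β hβ => by simp [hβ])⟩
    have h2le : (2 : Cardinal) ≤ κ := by
      refine le_trans ?_ hk.le
      exact_mod_cast (Cardinal.nat_lt_aleph0 2).le
    calc #R ≤ _ := mk_le_mk_of_subset hF
      _ ≤ #(Σ ξ : I κ, (Iio ξ → Bool)) := mk_range_le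
      _ ≤ κ := by
        rw [Cardinal.mk_sigma]
        calc Cardinal.sum (fun ξ : I κ => #(Iio ξ → Bool))
            ≤ Cardinal.sum (fun _ : I κ => κ) := by
              apply Cardinal.sum_le_sum
              intro ξ
              rw [← Cardinal.power_def Bool, Cardinal.mk_bool]
              calc (2 : Cardinal) ^ #(Iio ξ) ≤ κ ^ #(Iio ξ) :=
                    Cardinal.power_le_power_right h2le
                _ ≤ κ ^< κ := Cardinal.le_powerlt κ (mk_Iio_lt κ ξ)
                _ = κ := hpow
          _ = #(I κ) * κ := Cardinal.sum_const' _ _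
          _ = κ := by rw [mk_I]; exact Cardinal.mul_eq_self hk.le
  haveI hRne : Nonempty R := ⟨⟨cyl κ Bool z₀ ξ₀, ⟨z₀, ξ₀, rfl⟩, hz₀⟩⟩
  have hd : ∀ r : R, ∃ p : Sp κ Bool, p ∈ (r : Set (Sp κ Bool)) ∧ p ∉ S := by
    intro r
    obtain ⟨⟨z, ξ, hc⟩, hsub⟩ := r.2
    by_contra hcon
    push_neg at hcon
    have hopen : OpenK κ Bool (r : Set (Sp κ Bool)) := by rw [hc]; exact openK_cyl κ z ξ
    have hsubint : (r : Set (Sp κ Bool)) ⊆ interior S := interior_maximal hcon hopen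
    rw [hint] at hsubint
    have hzr : z ∈ (r : Set (Sp κ Bool)) := by rw [hc]; exact cyl_self κ z ξ
    exact absurd (hsubint hzr) (notMem_empty _)
  choose d hd1 hd2 using hd
  have hdcl : ∀ r : R, (d r) ∈ closure S := fun r => r.2.2 (hd1 r)
  obtain ⟨j⟩ : Nonempty (R ↪ I κ) := (Cardinal.le_def _ _).1 (by rw [mk_I]; exact hmkR)
  have hgs : Function.Surjective (Function.invFun j) := Function.invFun_surjective j.injective
  set g : I κ → R := Function.invFun j with hg
  obtain ⟨p⟩ : Nonempty (I κ ≃ I κ × I κ) := by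
    rw [← Cardinal.eq]
    simp only [Cardinal.mk_prod, Cardinal.lift_id, mk_I]
    exact (Cardinal.mul_eq_self hk.le).symm
  set f : I κ → R := fun α => g (p α).2 with hf
  have hfib : ∀ (r : R) (b : I κ), ∃ α, b < α ∧ f α = r := by
    intro r b
    obtain ⟨β₀, hβ₀⟩ := hgs r
    have hmem : ∀ γ : I κ, p.symm (γ, β₀) ∈ {α | f α = r} := by
      intro γ
      show g (p (p.symm (γ, β₀))).2 = r
      rw [Equiv.apply_symm_apply]
      exact hβ₀
    have hinj : Function.Injective
        (fun γ : I κ => (⟨p.symm (γ, β₀), hmem γ⟩ : {α | f α = r})) := by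
      intro a b hab
      exact (Prod.ext_iff.1 (p.symm.injective (congrArg Subtype.val hab))).1
    have hbig : κ ≤ #{α | f α = r} := by
      calc κ = #(I κ) := (mk_I κ).symm
        _ ≤ #{α | f α = r} := Cardinal.mk_le_of_injective hinj
    obtain ⟨α, hα1, hα2⟩ := exists_ge_of_big κ hk hbig b
    exact ⟨α, hα2, hα1⟩
  set U : I κ → I κ → Set (Sp κ Bool) := fun α β => (cyl κ Bool (d (f α)) β)ᶜ with hU
  have hcov : ∀ α, IsOCovSeq κ Bool S (U α) := by
    intro α
    refine ⟨fun β => isOpen_compl_iff.2 (closedK_cyl κ (d (f α)) β), ?_, ?_⟩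
    · intro β hβeq
      have hSopen : IsOpen S := by
        rw [← hβeq]; exact isOpen_compl_iff.2 (closedK_cyl κ (d (f α)) β)
      have hSemp : S = ∅ := by rw [← hSopen.interior_eq, hint]
      exact hSne.ne_empty hSemp
    · intro y hy
      have hne' : y ≠ d (f α) := fun h => hd2 (f α) (h ▸ hy)
      have hex : ∃ γ, y γ ≠ d (f α) γ := by
        by_contra hcon; push_neg at hcon; exact hne' (funext hcon)
      obtain ⟨γ, hγ⟩ := hex
      obtain ⟨b, hb⟩ := exists_gt γ
      exact mem_iUnion.2 ⟨b, fun hmem => hγ (hmem γ hb)⟩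
  have hess : ∀ α, EssK κ Bool S (U α) := by
    intro α s hs hsub
    obtain ⟨b, hb⟩ := exists_bound κ hk hreg hs
    obtain ⟨y, hyS, hycyl⟩ := closure_inter_cyl κ (hdcl (f α)) b
    obtain ⟨β, hβs, hyβ⟩ := mem_iUnion₂.1 (hsub hyS)
    exact hyβ (cyl_anti κ (hb β hβs).le hycyl)
  obtain ⟨V, hVsize, hGamma⟩ := hH U hcov hess
  have hGcov : S ⊆ ⋃ α, ⋂ β, ⋂ (_ : α < β), ⋃ η ∈ V β, (cyl κ Bool (d (f β)) η)ᶜ :=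
    hGamma.2.2
  refine ⟨fun α => S ∩ ⋂ β, ⋂ (_ : α < β), ⋃ η ∈ V β, (cyl κ Bool (d (f β)) η)ᶜ,
    fun α => ?_, ?_⟩
  · apply nwdK_subset κ
      (t := closure S ∩ ⋂ β, ⋂ (_ : α < β), ⋃ η ∈ V β, (cyl κ Bool (d (f β)) η)ᶜ)
    · exact inter_subset_inter subset_closure (Subset.refl _)
    · apply nwdK_of_closed κ hk
      · exact IsClosed.inter isClosed_closure
          (isClosed_iInter fun β => isClosed_iInter fun _ =>
            closedK_W κ hk hreg (d (f β)) (hVsize β))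
      · intro z ξ hcylsub
        have hsubcl : cyl κ Bool z ξ ⊆ closure S := hcylsub.trans inter_subset_left
        have hrR : (cyl κ Bool z ξ) ∈ R := ⟨⟨z, ξ, rfl⟩, hsubcl⟩
        obtain ⟨β, hαβ, hfβ⟩ := hfib ⟨_, hrR⟩ α
        have hdin : d (f β) ∈ cyl κ Bool z ξ := by rw [hfβ]; exact hd1 ⟨cyl κ Bool z ξ, hrR⟩
        have hdW : d (f β) ∈ ⋃ η ∈ V β, (cyl κ Bool (d (f β)) η)ᶜ := by
          have h2 := hcylsub hdin
          exact (mem_iInter.1 (mem_iInter.1 h2.2 β)) hαβ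
        obtain ⟨η, hη, hmem⟩ := mem_iUnion₂.1 hdW
        exact hmem (cyl_self κ _ _)
  · apply Set.Subset.antisymm
    · intro y hy
      obtain ⟨α, hα⟩ := mem_iUnion.1 (hGcov hy)
      exact mem_iUnion.2 ⟨α, hy, hα⟩
    · exact iUnion_subset fun α => inter_subset_left

end Aux


theorem stmt14 (κ : Cardinal.{0}) (hk : Cardinal.aleph0 < κ) (hreg : κ.IsRegular) (hpow : κ ^< κ = κ) :
    (∀ S : Set (Sp κ Bool), @interior _ (bt κ Bool) S = ∅ →
        KHurewicz κ Bool S → MeagreK κ Bool S) ∧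
    (∀ lam : Cardinal.{0}, κ < lam → lam ≤ 2 ^ κ →
      ∀ L : Set (Sp κ Bool), lam ≤ #L →
        (∀ X, MeagreK κ Bool X → #↥(L ∩ X) < lam) → ¬ KHurewicz κ Bool L) := by
  obtain ⟨hpart1⟩ : PLift (∀ S : Set (Sp κ Bool), @interior _ (bt κ Bool) S = ∅ →
      KHurewicz κ Bool S → MeagreK κ Bool S) := ⟨fun S h1 h2 => part1 κ hk hreg hpow S h1 h2⟩
  refine ⟨hpart1, ?_⟩
  intro lam hkl hlam L hLcard hLusin hH
  letI := bt κ Bool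
  haveI : Nonempty (I κ) := I_nonempty κ hk
  haveI : NoMaxOrder (I κ) := Cardinal.noMaxOrder hk.le
  by_cases hint : interior L = ∅
  · have hm := hpart1 L hint hH
    have hLL := hLusin L hm
    rw [inter_self] at hLL
    exact absurd hLcard hLL.not_ge
  · obtain ⟨x, hx⟩ := nonempty_iff_ne_empty.2 hint
    obtain ⟨ξ, hξ⟩ := exists_cyl_subset κ hk (isOpen_interior (s := L)) x hx
    have hcylL : cyl κ Bool x ξ ⊆ L := hξ.trans interior_subset
    have h2le : (2 : Cardinal) ≤ κ := by
      refine le_trans ?_ hk.le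
      exact_mod_cast (Cardinal.nat_lt_aleph0 2).le
    obtain ⟨q⟩ : Nonempty (I κ ≃ I κ × Bool) := by
      rw [← Cardinal.eq]
      simp only [Cardinal.mk_prod, Cardinal.lift_id, mk_I, Cardinal.mk_bool]
      exact (Cardinal.mul_eq_left hk.le h2le two_ne_zero).symm
    have hbigside : ∀ c : Bool, κ ≤ #{β : I κ | (q β).2 = c} := by
      intro c
      have hmem : ∀ γ : I κ, q.symm (γ, c) ∈ {β : I κ | (q β).2 = c} := by
        intro γ
        show (q (q.symm (γ, c))).2 = c
        rw [Equiv.apply_symm_apply]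
      have hinj : Function.Injective
          (fun γ : I κ => (⟨q.symm (γ, c), hmem γ⟩ : {β : I κ | (q β).2 = c})) := by
        intro a b hab
        exact (Prod.ext_iff.1 (q.symm.injective (congrArg Subtype.val hab))).1
      calc κ = #(I κ) := (mk_I κ).symm
        _ ≤ _ := Cardinal.mk_le_of_injective hinj
    set D : Set (Sp κ Bool) := {y | (∀ β < ξ, y β = x β) ∧
      ∀ β, ¬ β < ξ → (q β).2 = true → y β = false} with hD
    have hDL : D ⊆ L := fun y hy => hcylL (fun β hβ => hy.1 β hβ)
    have hDclosed : ClosedK κ Bool D := by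
      show IsClosed D
      rw [← isOpen_compl_iff]
      apply openK_of_cyl
      intro y hy
      by_cases h1 : ∀ β < ξ, y β = x β
      · have h2 : ∃ β, ¬β < ξ ∧ (q β).2 = true ∧ y β ≠ false := by
          by_contra hcon
          push_neg at hcon
          exact hy ⟨h1, fun β hb hq => hcon β (not_lt.1 hb) hq⟩
        obtain ⟨β, hβ1, hβ2, hβ3⟩ := h2
        obtain ⟨b, hb⟩ := exists_gt β
        refine ⟨b, fun z hz hzD => hβ3 ?_⟩
        have hzf := hzD.2 β hβ1 hβ2
        rw [hz β hb] at hzf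
        exact hzf
      · push_neg at h1
        obtain ⟨β, hβ, hne⟩ := h1
        refine ⟨ξ, fun z hz hzD => hne ?_⟩
        have hzx := hzD.1 β hβ
        rw [hz β hβ] at hzx
        exact hzx
    have hDnwd : NwdK κ Bool D := by
      apply nwdK_of_closed κ hk hDclosed
      intro z η hsub
      obtain ⟨β, hβU, hβgt⟩ := exists_ge_of_big κ hk (hbigside true) (max ξ η)
      have hβξ : ¬ β < ξ := not_lt.2 ((le_max_left ξ η).trans hβgt.le)
      have hβη : η ≤ β := (le_max_right ξ η).trans hβgt.le
      have hwin : (fun γ => if γ < η then z γ else true) ∈ cyl κ Bool z η :=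
        fun γ hγ => if_pos hγ
      have h5 := (hsub hwin).2 β hβξ hβU
      simp only [not_lt.2 hβη, if_false] at h5
      exact Bool.noConfusion h5
    have hFrbig : κ ≤ #{β : I κ | ¬ β < ξ ∧ (q β).2 = false} := by
      have hsplit : {β : I κ | (q β).2 = false} ⊆
          {β : I κ | ¬ β < ξ ∧ (q β).2 = false} ∪ Iio ξ := by
        intro β hβ
        by_cases h : β < ξ
        · exact Or.inr h
        · exact Or.inl ⟨h, hβ⟩
      by_contra hcon
      rw [not_le] at hcon
      have hchain : #{β : I κ | (q β).2 = false} ≤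
          #{β : I κ | ¬ β < ξ ∧ (q β).2 = false} + #(Iio ξ) :=
        (mk_le_mk_of_subset hsplit).trans (Cardinal.mk_union_le _ _)
      exact absurd ((hbigside false).trans hchain)
        (Cardinal.add_lt_of_lt hk.le hcon (mk_Iio_lt κ ξ)).not_ge
    have hDbig : lam ≤ #D := by
      set Fr : Set (I κ) := {β : I κ | ¬ β < ξ ∧ (q β).2 = false} with hFr
      set φ : (Fr → Bool) → Sp κ Bool := fun g β =>
        if h : β ∈ Fr then g ⟨β, h⟩ else if β < ξ then x β else false with hφ
      have hφD : ∀ g, φ g ∈ D := by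
        intro g
        constructor
        · intro β hβ
          have hnF : β ∉ Fr := fun h => h.1 hβ
          simp [hφ, hnF, hβ]
        · intro β hb1 hb2
          have hnF : β ∉ Fr := fun h => by simp [h.2] at hb2
          simp [hφ, hnF, hb1]
      have hφinj : Function.Injective φ := by
        intro g g' hgg
        funext b
        have hb := congrFun hgg b.1
        simpa [hφ, b.2] using hb
      calc lam ≤ 2 ^ κ := hlam
        _ ≤ 2 ^ #Fr := Cardinal.power_le_power_left two_ne_zero hFrbig
        _ = #(Fr → Bool) := by rw [← Cardinal.mk_bool, Cardinal.power_def]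
        _ ≤ #D := Cardinal.mk_le_of_injective
            (f := fun g => (⟨φ g, hφD g⟩ : D))
            (fun a b hab => hφinj (congrArg Subtype.val hab))
    have hmeag : MeagreK κ Bool D := ⟨fun _ => D, fun _ => hDnwd, (iUnion_const D).symm⟩
    have hLD := hLusin D hmeag
    rw [inter_eq_self_of_subset_right hDL] at hLD
    exact absurd hDbig hLD.not_ge


end GenSp
end
end

section
/- Let κ be an uncountable regular cardinal with κ^{<κ}=κ and let K be 2 or κ. Every small set in K^κ is nowhere dense, but there exists a nowhere dense subset of K^κ that is not κ-strongly null (hence not small). -/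
noncomputable section

open Cardinal Set

namespace GenSp

variable (κ : Cardinal.{0}) (A : Type)

section Aux19
variable {κ A}

lemma self_mem_cyl (x : Sp κ A) (ξ : I κ) : x ∈ cyl κ A x ξ := fun _ _ => rfl

lemma isBasisK (κ A) [Nonempty (I κ)] :
    @TopologicalSpace.IsTopologicalBasis (Sp κ A) (bt κ A)
    {S | ∃ x ξ, S = cyl κ A x ξ} := by
  letI := bt κ A
  refine ⟨?_, ?_, rfl⟩
  · rintro t1 ⟨x1, ξ1, rfl⟩ t2 ⟨x2, ξ2, rfl⟩ y ⟨h1, h2⟩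
    refine ⟨cyl κ A y (max ξ1 ξ2), ⟨y, _, rfl⟩, self_mem_cyl y _, ?_⟩
    intro z hz
    exact ⟨fun β hβ => (hz β (lt_of_lt_of_le hβ (le_max_left _ _))).trans (h1 β hβ),
           fun β hβ => (hz β (lt_of_lt_of_le hβ (le_max_right _ _))).trans (h2 β hβ)⟩
  · apply Set.eq_univ_of_univ_subset
    intro y _
    exact Set.mem_sUnion.2 ⟨cyl κ A y (Classical.arbitrary _), ⟨y, _, rfl⟩, self_mem_cyl _ _⟩

lemma openK_of_cyl_s19 [Nonempty (I κ)] {U : Set (Sp κ A)}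
    (h : ∀ y ∈ U, ∃ ξ, cyl κ A y ξ ⊆ U) : OpenK κ A U := by
  letI := bt κ A
  refine (isBasisK κ A).isOpen_iff.mpr (fun y hy => ?_)
  obtain ⟨ξ, hξ⟩ := h y hy
  exact ⟨cyl κ A y ξ, ⟨y, ξ, rfl⟩, self_mem_cyl y ξ, hξ⟩

def sidx (i : I κ) : Ordinal := ((Ordinal.ToType.mk (o := κ.ord)).symm i : Ordinal)
def mkI (b : Ordinal) (h : b < κ.ord) : I κ := Ordinal.ToType.mk (o := κ.ord) ⟨b, h⟩
lemma sidx_lt (i : I κ) : sidx i < κ.ord := ((Ordinal.ToType.mk (o := κ.ord)).symm i).2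
lemma sidx_mkI (b : Ordinal) (h : b < κ.ord) : sidx (mkI b h : I κ) = b := by
  simp [sidx, mkI]
lemma lt_iff_sidx {i j : I κ} : i < j ↔ sidx i < sidx j := by
  rw [← (Ordinal.ToType.mk (o := κ.ord)).symm.lt_iff_lt]; rfl
lemma sidx_inj {i j : I κ} (h : sidx i = sidx j) : i = j :=
  (Ordinal.ToType.mk (o := κ.ord)).symm.injective (Subtype.ext h)

end Aux19

theorem stmt19 (κ : Cardinal.{0}) (hk : Cardinal.aleph0 < κ) (hreg : κ.IsRegular) (hpow : κ ^< κ = κ)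
    (A : Type) (hA : #A = 2 ∨ #A = κ) :
    (∀ S : Set (Sp κ A), SmallK κ A S → NwdK κ A S) ∧
    (∃ S : Set (Sp κ A), NwdK κ A S ∧ ¬ SNullK κ A S) := by
  classical
  letI := bt κ A
  have ho : Order.IsSuccLimit κ.ord := Cardinal.isSuccLimit_ord hk.le
  haveI : Nonempty (I κ) := by
    rw [← Cardinal.mk_ne_zero_iff, I, Cardinal.mk_toType, Cardinal.card_ord]
    exact (aleph0_pos.trans hk).ne'
  have h2A : (2 : Cardinal) ≤ #A := by
    rcases hA with h | h <;> rw [h]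
    exact ((nat_lt_aleph0 2).le.trans hk.le).trans_eq (by norm_num)
  obtain ⟨a0, a1, hne⟩ : ∃ x y : A, x ≠ y := Cardinal.two_le_iff.mp h2A
  -- the "successor" coordinate
  have hsucclt : ∀ i : I κ, sidx i + 1 < κ.ord := fun i => by
    rw [Ordinal.add_one_eq_succ]; exact ho.succ_lt (sidx_lt i)
  set isucc : I κ → I κ := fun i => mkI (sidx i + 1) (hsucclt i) with hisucc
  have hlt_isucc : ∀ i : I κ, i < isucc i := fun i => by
    rw [lt_iff_sidx, hisucc, sidx_mkI]; exact lt_add_one _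
  constructor
  · -- small implies nowhere dense
    rintro S ⟨lam, hlam, hcov⟩
    show interior (closure S) = ∅
    rw [Set.eq_empty_iff_forall_notMem]
    intro y hy
    obtain ⟨t, ⟨p, ξ, rfl⟩, hyt, hts⟩ :=
      (isBasisK κ A).exists_subset_of_mem_open hy isOpen_interior
    have hsub : cyl κ A p ξ ⊆ closure S := hts.trans interior_subset
    set d : Ordinal := lam.ord with hd
    have hlvl : sidx ξ + d < κ.ord := by
      rw [Cardinal.lt_ord, Ordinal.card_add, hd, Cardinal.card_ord]
      exact Cardinal.add_lt_of_lt hk.le (Cardinal.lt_ord.mp (sidx_lt ξ)) hlam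
    set α : I κ := mkI (sidx ξ + d) hlvl with hα
    obtain ⟨T, hT, hST⟩ := hcov α
    -- the union of level-α cylinders over T is closed
    have hUcl : IsClosed (⋃ x ∈ T, cyl κ A x α) := by
      rw [← isOpen_compl_iff]
      apply openK_of_cyl_s19
      intro z hz
      refine ⟨α, fun w hw => ?_⟩
      simp only [Set.mem_compl_iff, Set.mem_iUnion] at hz ⊢
      rintro ⟨x, hx, hxc⟩
      exact hz ⟨x, hx, fun β hβ => (hw β hβ).symm.trans (hxc β hβ)⟩
    have hclosU : closure S ⊆ ⋃ x ∈ T, cyl κ A x α := closure_minimal hST hUcl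
    -- coordinates in the interval [sidx ξ, sidx ξ + d)
    set cval : d.ToType → Ordinal := fun c => ((Ordinal.ToType.mk (o := d)).symm c : Ordinal)
      with hcval
    have hcval_lt : ∀ c, cval c < d := fun c => ((Ordinal.ToType.mk (o := d)).symm c).2
    have hcval_inj : Function.Injective cval := fun c c' h =>
      (Ordinal.ToType.mk (o := d)).symm.injective (Subtype.ext h)
    have hcd : ∀ c : d.ToType, sidx ξ + cval c < κ.ord :=
      fun c => lt_trans ((add_lt_add_iff_left _).mpr (hcval_lt c)) hlvl
    set ι : d.ToType → I κ := fun c => mkI (sidx ξ + cval c) (hcd c) with hι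
    have hι_lt : ∀ c, ι c < α := fun c => by
      rw [lt_iff_sidx, hι, hα, sidx_mkI, sidx_mkI]
      exact (add_lt_add_iff_left _).mpr (hcval_lt c)
    have hι_ge : ∀ c, ¬ ι c < ξ := fun c => by
      rw [lt_iff_sidx, hι, sidx_mkI]
      exact not_lt.mpr le_self_add
    have hι_inj : Function.Injective ι := by
      intro c c' h
      have := congrArg sidx h
      rw [hι, sidx_mkI, sidx_mkI, add_right_inj] at this
      exact hcval_inj this
    set zf : (d.ToType → A) → Sp κ A := fun w i =>
      if h : ∃ c, ι c = i then w h.choose else p i with hzf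
    have hzfι : ∀ w c, zf w (ι c) = w c := by
      intro w c
      have h : ∃ c', ι c' = ι c := ⟨c, rfl⟩
      rw [hzf]; simp only [dif_pos h]
      exact congrArg w (hι_inj h.choose_spec)
    have hzfmem : ∀ w, zf w ∈ cyl κ A p ξ := by
      intro w β hβ
      rw [hzf]; simp only
      rw [dif_neg]
      rintro ⟨c, rfl⟩
      exact hι_ge c hβ
    have hx : ∀ w, ∃ x : ↥T, zf w ∈ cyl κ A (x : Sp κ A) α := by
      intro w
      have := hclosU (hsub (hzfmem w))
      simp only [Set.mem_iUnion] at this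
      obtain ⟨x, hxT, hc⟩ := this
      exact ⟨⟨x, hxT⟩, hc⟩
    have hΦinj : Function.Injective (fun w => (hx w).choose) := by
      intro w w' h
      simp only at h
      funext c
      have h1 := (hx w).choose_spec (ι c) (hι_lt c)
      have h2 := (hx w').choose_spec (ι c) (hι_lt c)
      rw [hzfι] at h1 h2
      rw [h1, h2, h]
    have hcard : #(d.ToType → A) ≤ lam :=
      le_trans (Cardinal.mk_le_of_injective hΦinj) hT
    have : (#A) ^ lam ≤ lam := by
      rw [← Cardinal.power_def A d.ToType] at hcard
      rwa [show #(d.ToType) = lam by rw [Cardinal.mk_toType, hd, Cardinal.card_ord]] at hcard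
    exact absurd (lt_of_lt_of_le (Cardinal.cantor lam)
      (le_trans (Cardinal.power_le_power_right h2A) this)) (lt_irrefl _)
  · -- a nowhere dense set which is not strongly null
    set S : Set (Sp κ A) := {y | ∀ i : I κ, (∃ b, sidx i = b + 1) → y i = a0} with hSdef
    have hSclosed : IsClosed S := by
      rw [← isOpen_compl_iff]
      apply openK_of_cyl_s19
      intro y hy
      simp only [hSdef, Set.mem_compl_iff, Set.mem_setOf_eq, not_forall] at hy
      obtain ⟨i, hib, hiy⟩ := hy
      refine ⟨isucc i, fun z hz => ?_⟩
      simp only [hSdef, Set.mem_compl_iff, Set.mem_setOf_eq, not_forall]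
      exact ⟨i, hib, fun e => hiy ((hz i (hlt_isucc i)).symm.trans e)⟩
    have hSint : interior S = ∅ := by
      rw [Set.eq_empty_iff_forall_notMem]
      intro y hy
      obtain ⟨t, ⟨p, ξ, rfl⟩, hyt, hts⟩ :=
        (isBasisK κ A).exists_subset_of_mem_open hy isOpen_interior
      have hsub : cyl κ A p ξ ⊆ S := hts.trans interior_subset
      set z : Sp κ A := fun i => if i = isucc ξ then a1 else p i with hzdef
      have hzmem : z ∈ cyl κ A p ξ := by
        intro β hβ
        rw [hzdef]; simp only
        rw [if_neg]
        exact fun e => absurd (e ▸ hβ) (not_lt.mpr (hlt_isucc ξ).le)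
      have := hsub hzmem (isucc ξ) ⟨sidx ξ, sidx_mkI _ _⟩
      rw [hzdef] at this; simp only [if_pos rfl] at this
      exact hne this.symm
    refine ⟨S, ?_, ?_⟩
    · show interior (closure S) = ∅
      rw [hSclosed.closure_eq, hSint]
    · intro hSN
      have hωlt : ∀ i : I κ, Ordinal.omega0 * sidx i < κ.ord := by
        intro i
        rw [Cardinal.lt_ord, Ordinal.card_mul, Ordinal.card_omega0]
        exact Cardinal.mul_lt_of_lt hk.le hk (Cardinal.lt_ord.mp (sidx_lt i))
      set limc : I κ → I κ := fun i => mkI (Ordinal.omega0 * sidx i) (hωlt i) with hlimc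
      have hlimc_inj : Function.Injective limc := by
        intro i j h
        have h1 := congrArg sidx h
        rw [hlimc, sidx_mkI, sidx_mkI] at h1
        refine sidx_inj ?_
        rcases lt_trichotomy (sidx i) (sidx j) with h' | h' | h'
        · exact absurd h1 (ne_of_lt ((mul_lt_mul_iff_of_pos_left Ordinal.omega0_pos).mpr h'))
        · exact h'
        · exact absurd h1.symm (ne_of_lt ((mul_lt_mul_iff_of_pos_left Ordinal.omega0_pos).mpr h'))
      have hlimc_nsucc : ∀ (i : I κ) (b : Ordinal), sidx (limc i) ≠ b + 1 := by
        intro i b h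
        rw [hlimc, sidx_mkI] at h
        rcases eq_or_ne (sidx i) 0 with h0 | h0
        · rw [h0, mul_zero] at h
          exact (Ordinal.succ_ne_zero b) (by rw [← Ordinal.add_one_eq_succ, ← h])
        · have hl : Order.IsSuccLimit (Ordinal.omega0 * sidx i) :=
            Ordinal.isSuccLimit_mul_left Ordinal.isSuccLimit_omega0 (pos_iff_ne_zero.2 h0)
          have hb : b < Ordinal.omega0 * sidx i := by rw [h]; exact lt_add_one b
          have := hl.succ_lt hb
          rw [← Ordinal.add_one_eq_succ, ← h] at this
          exact lt_irrefl _ this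
      obtain ⟨a, ha⟩ := hSN (fun α => isucc (limc α))
      set g : I κ → A := fun α => if a α (limc α) = a0 then a1 else a0 with hg
      have hgne : ∀ α, g α ≠ a α (limc α) := by
        intro α
        rw [hg]; simp only
        by_cases h : a α (limc α) = a0
        · rw [if_pos h, h]; exact hne.symm
        · rw [if_neg h]; exact fun e => h e.symm
      set y : Sp κ A := fun i => if h : ∃ α, limc α = i then g h.choose else a0 with hy
      have hyS : y ∈ S := by
        intro i hib
        rw [hy]; simp only
        rw [dif_neg]
        rintro ⟨α, rfl⟩
        obtain ⟨b, hb⟩ := hib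
        exact hlimc_nsucc α b hb
      have := ha hyS
      simp only [Set.mem_iUnion] at this
      obtain ⟨α, hc⟩ := this
      have h1 := hc (limc α) (hlt_isucc (limc α))
      have h2 : y (limc α) = g α := by
        have hex : ∃ α', limc α' = limc α := ⟨α, rfl⟩
        rw [hy]; simp only [dif_pos hex]
        exact congrArg g (hlimc_inj hex.choose_spec)
      exact hgne α (h2 ▸ h1)

end GenSp
end
end
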